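/- Index the 15 coordinates by the pairs z_{ij} (1≤i<j≤3), z_{i\bar j} (i,j ∈ {1,2,3}), and z_{\bar i\bar j} (1≤i<j≤3), and let F be the cubic form on ℂ^{15} given by the triple wedge product of 2-forms on a complex 3-torus: F(x) = ((∑ x_{ij} dz_i∧dz_j + ∑ x_{i\bar j} dz_i∧d\bar z_j + ∑ x_{\bar i\bar j} d\bar z_i∧d\bar z_j)^3 evaluated against dz_1∧dz_2∧dz_3∧d\bar z_1∧d\bar z_2∧d\bar z_3). If q ∈ ℂ^{15} is a point at which the Hessian matrix of F has rank at most 1, then q = 0. -/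
import Mathlib


open MvPolynomial

/-- The Hessian matrix of a multivariate polynomial at a point. -/
noncomputable def hessian {σ : Type*} (F : MvPolynomial σ ℂ) (p : σ → ℂ) :
    Matrix σ σ ℂ :=
  fun i j => eval p (pderiv i (pderiv j F))

/-- Index set for the 15 coordinates on `Λ²(ℂ⁶)*`: unordered pairs from the basis
`dz₁,dz₂,dz₃,d\bar z₁,d\bar z₂,d\bar z₃` (indices `0,1,2` are the `dzᵢ` and
`3,4,5` are the `d\bar zⱼ`).  So `z_{ij} ↔ (i-1,j-1)`, `z_{i\bar j} ↔ (i-1, j+2)`,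
`z_{\bar i\bar j} ↔ (i+2, j+2)`. -/
abbrev Idx : Type := {p : Fin 6 × Fin 6 // p.1 < p.2}

/-- The antisymmetric matrix of coordinates of a general 2-form `α`. -/
noncomputable def coordMat : Fin 6 → Fin 6 → MvPolynomial Idx ℂ := fun i j =>
  if h : i < j then X ⟨(i, j), h⟩
  else if h : j < i then -X ⟨(j, i), h⟩ else 0

/-- The cubic form `F` on `ℂ¹⁵ = Λ²(ℂ⁶)*` given by the coefficient of the top form
`dz₁∧dz₂∧dz₃∧d\bar z₁∧d\bar z₂∧d\bar z₃` in `α∧α∧α`: writing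
`α = (1/2)∑_{i,j} A_{ij} e_i∧e_j` with `A` antisymmetric, this coefficient is
`(1/8)·∑_{σ ∈ S₆} sign(σ)·A_{σ(1)σ(2)}·A_{σ(3)σ(4)}·A_{σ(5)σ(6)}`. -/
noncomputable def wedgeCubic : MvPolynomial Idx ℂ :=
  C (8⁻¹ : ℂ) * ∑ σ : Equiv.Perm (Fin 6),
    C ((Equiv.Perm.sign σ : ℤ) : ℂ) *
      (coordMat (σ 0) (σ 1) * (coordMat (σ 2) (σ 3) * coordMat (σ 4) (σ 5)))

def pr (a b : Fin 6) (h : a < b := by decide) : Idx := ⟨(a,b),h⟩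

lemma sum_perm_succ {n : ℕ} {M : Type*} [AddCommMonoid M] (f : Equiv.Perm (Fin (n+1)) → M) :
    ∑ σ, f σ = ∑ p : Fin (n+1), ∑ e : Equiv.Perm (Fin n),
      f (Equiv.Perm.decomposeFin.symm (p, e)) := by
  rw [← Equiv.sum_comp Equiv.Perm.decomposeFin.symm, Fintype.sum_prod_type]

lemma sum_perm_zero {M : Type*} [AddCommMonoid M] (f : Equiv.Perm (Fin 0) → M) :
    ∑ σ, f σ = f 1 := by
  rw [Fintype.sum_subsingleton f 1]

lemma sw6_0_0 : Equiv.swap (0 : Fin 6) (0 : Fin 6) (0 : Fin 6) = (0 : Fin 6) := by decide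
lemma sw6_0_1 : Equiv.swap (0 : Fin 6) (0 : Fin 6) (1 : Fin 6) = (1 : Fin 6) := by decide
lemma sw6_0_2 : Equiv.swap (0 : Fin 6) (0 : Fin 6) (2 : Fin 6) = (2 : Fin 6) := by decide
lemma sw6_0_3 : Equiv.swap (0 : Fin 6) (0 : Fin 6) (3 : Fin 6) = (3 : Fin 6) := by decide
lemma sw6_0_4 : Equiv.swap (0 : Fin 6) (0 : Fin 6) (4 : Fin 6) = (4 : Fin 6) := by decide
lemma sw6_0_5 : Equiv.swap (0 : Fin 6) (0 : Fin 6) (5 : Fin 6) = (5 : Fin 6) := by decide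
lemma sw6_1_0 : Equiv.swap (0 : Fin 6) (1 : Fin 6) (0 : Fin 6) = (1 : Fin 6) := by decide
lemma sw6_1_1 : Equiv.swap (0 : Fin 6) (1 : Fin 6) (1 : Fin 6) = (0 : Fin 6) := by decide
lemma sw6_1_2 : Equiv.swap (0 : Fin 6) (1 : Fin 6) (2 : Fin 6) = (2 : Fin 6) := by decide
lemma sw6_1_3 : Equiv.swap (0 : Fin 6) (1 : Fin 6) (3 : Fin 6) = (3 : Fin 6) := by decide
lemma sw6_1_4 : Equiv.swap (0 : Fin 6) (1 : Fin 6) (4 : Fin 6) = (4 : Fin 6) := by decide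
lemma sw6_1_5 : Equiv.swap (0 : Fin 6) (1 : Fin 6) (5 : Fin 6) = (5 : Fin 6) := by decide
lemma sw6_2_0 : Equiv.swap (0 : Fin 6) (2 : Fin 6) (0 : Fin 6) = (2 : Fin 6) := by decide
lemma sw6_2_1 : Equiv.swap (0 : Fin 6) (2 : Fin 6) (1 : Fin 6) = (1 : Fin 6) := by decide
lemma sw6_2_2 : Equiv.swap (0 : Fin 6) (2 : Fin 6) (2 : Fin 6) = (0 : Fin 6) := by decide
lemma sw6_2_3 : Equiv.swap (0 : Fin 6) (2 : Fin 6) (3 : Fin 6) = (3 : Fin 6) := by decide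
lemma sw6_2_4 : Equiv.swap (0 : Fin 6) (2 : Fin 6) (4 : Fin 6) = (4 : Fin 6) := by decide
lemma sw6_2_5 : Equiv.swap (0 : Fin 6) (2 : Fin 6) (5 : Fin 6) = (5 : Fin 6) := by decide
lemma sw6_3_0 : Equiv.swap (0 : Fin 6) (3 : Fin 6) (0 : Fin 6) = (3 : Fin 6) := by decide
lemma sw6_3_1 : Equiv.swap (0 : Fin 6) (3 : Fin 6) (1 : Fin 6) = (1 : Fin 6) := by decide
lemma sw6_3_2 : Equiv.swap (0 : Fin 6) (3 : Fin 6) (2 : Fin 6) = (2 : Fin 6) := by decide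
lemma sw6_3_3 : Equiv.swap (0 : Fin 6) (3 : Fin 6) (3 : Fin 6) = (0 : Fin 6) := by decide
lemma sw6_3_4 : Equiv.swap (0 : Fin 6) (3 : Fin 6) (4 : Fin 6) = (4 : Fin 6) := by decide
lemma sw6_3_5 : Equiv.swap (0 : Fin 6) (3 : Fin 6) (5 : Fin 6) = (5 : Fin 6) := by decide
lemma sw6_4_0 : Equiv.swap (0 : Fin 6) (4 : Fin 6) (0 : Fin 6) = (4 : Fin 6) := by decide
lemma sw6_4_1 : Equiv.swap (0 : Fin 6) (4 : Fin 6) (1 : Fin 6) = (1 : Fin 6) := by decide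
lemma sw6_4_2 : Equiv.swap (0 : Fin 6) (4 : Fin 6) (2 : Fin 6) = (2 : Fin 6) := by decide
lemma sw6_4_3 : Equiv.swap (0 : Fin 6) (4 : Fin 6) (3 : Fin 6) = (3 : Fin 6) := by decide
lemma sw6_4_4 : Equiv.swap (0 : Fin 6) (4 : Fin 6) (4 : Fin 6) = (0 : Fin 6) := by decide
lemma sw6_4_5 : Equiv.swap (0 : Fin 6) (4 : Fin 6) (5 : Fin 6) = (5 : Fin 6) := by decide
lemma sw6_5_0 : Equiv.swap (0 : Fin 6) (5 : Fin 6) (0 : Fin 6) = (5 : Fin 6) := by decide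
lemma sw6_5_1 : Equiv.swap (0 : Fin 6) (5 : Fin 6) (1 : Fin 6) = (1 : Fin 6) := by decide
lemma sw6_5_2 : Equiv.swap (0 : Fin 6) (5 : Fin 6) (2 : Fin 6) = (2 : Fin 6) := by decide
lemma sw6_5_3 : Equiv.swap (0 : Fin 6) (5 : Fin 6) (3 : Fin 6) = (3 : Fin 6) := by decide
lemma sw6_5_4 : Equiv.swap (0 : Fin 6) (5 : Fin 6) (4 : Fin 6) = (4 : Fin 6) := by decide
lemma sw6_5_5 : Equiv.swap (0 : Fin 6) (5 : Fin 6) (5 : Fin 6) = (0 : Fin 6) := by decide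
lemma sw5_0_0 : Equiv.swap (0 : Fin 5) (0 : Fin 5) (0 : Fin 5) = (0 : Fin 5) := by decide
lemma sw5_0_1 : Equiv.swap (0 : Fin 5) (0 : Fin 5) (1 : Fin 5) = (1 : Fin 5) := by decide
lemma sw5_0_2 : Equiv.swap (0 : Fin 5) (0 : Fin 5) (2 : Fin 5) = (2 : Fin 5) := by decide
lemma sw5_0_3 : Equiv.swap (0 : Fin 5) (0 : Fin 5) (3 : Fin 5) = (3 : Fin 5) := by decide
lemma sw5_0_4 : Equiv.swap (0 : Fin 5) (0 : Fin 5) (4 : Fin 5) = (4 : Fin 5) := by decide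
lemma sw5_1_0 : Equiv.swap (0 : Fin 5) (1 : Fin 5) (0 : Fin 5) = (1 : Fin 5) := by decide
lemma sw5_1_1 : Equiv.swap (0 : Fin 5) (1 : Fin 5) (1 : Fin 5) = (0 : Fin 5) := by decide
lemma sw5_1_2 : Equiv.swap (0 : Fin 5) (1 : Fin 5) (2 : Fin 5) = (2 : Fin 5) := by decide
lemma sw5_1_3 : Equiv.swap (0 : Fin 5) (1 : Fin 5) (3 : Fin 5) = (3 : Fin 5) := by decide
lemma sw5_1_4 : Equiv.swap (0 : Fin 5) (1 : Fin 5) (4 : Fin 5) = (4 : Fin 5) := by decide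
lemma sw5_2_0 : Equiv.swap (0 : Fin 5) (2 : Fin 5) (0 : Fin 5) = (2 : Fin 5) := by decide
lemma sw5_2_1 : Equiv.swap (0 : Fin 5) (2 : Fin 5) (1 : Fin 5) = (1 : Fin 5) := by decide
lemma sw5_2_2 : Equiv.swap (0 : Fin 5) (2 : Fin 5) (2 : Fin 5) = (0 : Fin 5) := by decide
lemma sw5_2_3 : Equiv.swap (0 : Fin 5) (2 : Fin 5) (3 : Fin 5) = (3 : Fin 5) := by decide
lemma sw5_2_4 : Equiv.swap (0 : Fin 5) (2 : Fin 5) (4 : Fin 5) = (4 : Fin 5) := by decide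
lemma sw5_3_0 : Equiv.swap (0 : Fin 5) (3 : Fin 5) (0 : Fin 5) = (3 : Fin 5) := by decide
lemma sw5_3_1 : Equiv.swap (0 : Fin 5) (3 : Fin 5) (1 : Fin 5) = (1 : Fin 5) := by decide
lemma sw5_3_2 : Equiv.swap (0 : Fin 5) (3 : Fin 5) (2 : Fin 5) = (2 : Fin 5) := by decide
lemma sw5_3_3 : Equiv.swap (0 : Fin 5) (3 : Fin 5) (3 : Fin 5) = (0 : Fin 5) := by decide
lemma sw5_3_4 : Equiv.swap (0 : Fin 5) (3 : Fin 5) (4 : Fin 5) = (4 : Fin 5) := by decide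
lemma sw5_4_0 : Equiv.swap (0 : Fin 5) (4 : Fin 5) (0 : Fin 5) = (4 : Fin 5) := by decide
lemma sw5_4_1 : Equiv.swap (0 : Fin 5) (4 : Fin 5) (1 : Fin 5) = (1 : Fin 5) := by decide
lemma sw5_4_2 : Equiv.swap (0 : Fin 5) (4 : Fin 5) (2 : Fin 5) = (2 : Fin 5) := by decide
lemma sw5_4_3 : Equiv.swap (0 : Fin 5) (4 : Fin 5) (3 : Fin 5) = (3 : Fin 5) := by decide
lemma sw5_4_4 : Equiv.swap (0 : Fin 5) (4 : Fin 5) (4 : Fin 5) = (0 : Fin 5) := by decide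
lemma sw4_0_0 : Equiv.swap (0 : Fin 4) (0 : Fin 4) (0 : Fin 4) = (0 : Fin 4) := by decide
lemma sw4_0_1 : Equiv.swap (0 : Fin 4) (0 : Fin 4) (1 : Fin 4) = (1 : Fin 4) := by decide
lemma sw4_0_2 : Equiv.swap (0 : Fin 4) (0 : Fin 4) (2 : Fin 4) = (2 : Fin 4) := by decide
lemma sw4_0_3 : Equiv.swap (0 : Fin 4) (0 : Fin 4) (3 : Fin 4) = (3 : Fin 4) := by decide
lemma sw4_1_0 : Equiv.swap (0 : Fin 4) (1 : Fin 4) (0 : Fin 4) = (1 : Fin 4) := by decide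
lemma sw4_1_1 : Equiv.swap (0 : Fin 4) (1 : Fin 4) (1 : Fin 4) = (0 : Fin 4) := by decide
lemma sw4_1_2 : Equiv.swap (0 : Fin 4) (1 : Fin 4) (2 : Fin 4) = (2 : Fin 4) := by decide
lemma sw4_1_3 : Equiv.swap (0 : Fin 4) (1 : Fin 4) (3 : Fin 4) = (3 : Fin 4) := by decide
lemma sw4_2_0 : Equiv.swap (0 : Fin 4) (2 : Fin 4) (0 : Fin 4) = (2 : Fin 4) := by decide
lemma sw4_2_1 : Equiv.swap (0 : Fin 4) (2 : Fin 4) (1 : Fin 4) = (1 : Fin 4) := by decide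
lemma sw4_2_2 : Equiv.swap (0 : Fin 4) (2 : Fin 4) (2 : Fin 4) = (0 : Fin 4) := by decide
lemma sw4_2_3 : Equiv.swap (0 : Fin 4) (2 : Fin 4) (3 : Fin 4) = (3 : Fin 4) := by decide
lemma sw4_3_0 : Equiv.swap (0 : Fin 4) (3 : Fin 4) (0 : Fin 4) = (3 : Fin 4) := by decide
lemma sw4_3_1 : Equiv.swap (0 : Fin 4) (3 : Fin 4) (1 : Fin 4) = (1 : Fin 4) := by decide
lemma sw4_3_2 : Equiv.swap (0 : Fin 4) (3 : Fin 4) (2 : Fin 4) = (2 : Fin 4) := by decide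
lemma sw4_3_3 : Equiv.swap (0 : Fin 4) (3 : Fin 4) (3 : Fin 4) = (0 : Fin 4) := by decide
lemma sw3_0_0 : Equiv.swap (0 : Fin 3) (0 : Fin 3) (0 : Fin 3) = (0 : Fin 3) := by decide
lemma sw3_0_1 : Equiv.swap (0 : Fin 3) (0 : Fin 3) (1 : Fin 3) = (1 : Fin 3) := by decide
lemma sw3_0_2 : Equiv.swap (0 : Fin 3) (0 : Fin 3) (2 : Fin 3) = (2 : Fin 3) := by decide
lemma sw3_1_0 : Equiv.swap (0 : Fin 3) (1 : Fin 3) (0 : Fin 3) = (1 : Fin 3) := by decide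
lemma sw3_1_1 : Equiv.swap (0 : Fin 3) (1 : Fin 3) (1 : Fin 3) = (0 : Fin 3) := by decide
lemma sw3_1_2 : Equiv.swap (0 : Fin 3) (1 : Fin 3) (2 : Fin 3) = (2 : Fin 3) := by decide
lemma sw3_2_0 : Equiv.swap (0 : Fin 3) (2 : Fin 3) (0 : Fin 3) = (2 : Fin 3) := by decide
lemma sw3_2_1 : Equiv.swap (0 : Fin 3) (2 : Fin 3) (1 : Fin 3) = (1 : Fin 3) := by decide
lemma sw3_2_2 : Equiv.swap (0 : Fin 3) (2 : Fin 3) (2 : Fin 3) = (0 : Fin 3) := by decide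
lemma sw2_0_0 : Equiv.swap (0 : Fin 2) (0 : Fin 2) (0 : Fin 2) = (0 : Fin 2) := by decide
lemma sw2_0_1 : Equiv.swap (0 : Fin 2) (0 : Fin 2) (1 : Fin 2) = (1 : Fin 2) := by decide
lemma sw2_1_0 : Equiv.swap (0 : Fin 2) (1 : Fin 2) (0 : Fin 2) = (1 : Fin 2) := by decide
lemma sw2_1_1 : Equiv.swap (0 : Fin 2) (1 : Fin 2) (1 : Fin 2) = (0 : Fin 2) := by decide
lemma sc5_0 : Fin.succ (0 : Fin 5) = (1 : Fin 6) := by decide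
lemma sc5_1 : Fin.succ (1 : Fin 5) = (2 : Fin 6) := by decide
lemma sc5_2 : Fin.succ (2 : Fin 5) = (3 : Fin 6) := by decide
lemma sc5_3 : Fin.succ (3 : Fin 5) = (4 : Fin 6) := by decide
lemma sc5_4 : Fin.succ (4 : Fin 5) = (5 : Fin 6) := by decide
lemma sc4_0 : Fin.succ (0 : Fin 4) = (1 : Fin 5) := by decide
lemma sc4_1 : Fin.succ (1 : Fin 4) = (2 : Fin 5) := by decide
lemma sc4_2 : Fin.succ (2 : Fin 4) = (3 : Fin 5) := by decide
lemma sc4_3 : Fin.succ (3 : Fin 4) = (4 : Fin 5) := by decide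
lemma sc3_0 : Fin.succ (0 : Fin 3) = (1 : Fin 4) := by decide
lemma sc3_1 : Fin.succ (1 : Fin 3) = (2 : Fin 4) := by decide
lemma sc3_2 : Fin.succ (2 : Fin 3) = (3 : Fin 4) := by decide
lemma sc2_0 : Fin.succ (0 : Fin 2) = (1 : Fin 3) := by decide
lemma sc2_1 : Fin.succ (1 : Fin 2) = (2 : Fin 3) := by decide
lemma sc1_0 : Fin.succ (0 : Fin 1) = (1 : Fin 2) := by decide

lemma ev_0_0 (x : Idx → ℂ) : MvPolynomial.eval x (coordMat 0 0) = 0 := by simp (config := { decide := true }) [coordMat, pr]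
lemma ev_0_1 (x : Idx → ℂ) : MvPolynomial.eval x (coordMat 0 1) = x (pr 0 1) := by simp (config := { decide := true }) [coordMat, pr]
lemma ev_0_2 (x : Idx → ℂ) : MvPolynomial.eval x (coordMat 0 2) = x (pr 0 2) := by simp (config := { decide := true }) [coordMat, pr]
lemma ev_0_3 (x : Idx → ℂ) : MvPolynomial.eval x (coordMat 0 3) = x (pr 0 3) := by simp (config := { decide := true }) [coordMat, pr]
lemma ev_0_4 (x : Idx → ℂ) : MvPolynomial.eval x (coordMat 0 4) = x (pr 0 4) := by simp (config := { decide := true }) [coordMat, pr]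
lemma ev_0_5 (x : Idx → ℂ) : MvPolynomial.eval x (coordMat 0 5) = x (pr 0 5) := by simp (config := { decide := true }) [coordMat, pr]
lemma ev_1_0 (x : Idx → ℂ) : MvPolynomial.eval x (coordMat 1 0) = -x (pr 0 1) := by simp (config := { decide := true }) [coordMat, pr]
lemma ev_1_1 (x : Idx → ℂ) : MvPolynomial.eval x (coordMat 1 1) = 0 := by simp (config := { decide := true }) [coordMat, pr]
lemma ev_1_2 (x : Idx → ℂ) : MvPolynomial.eval x (coordMat 1 2) = x (pr 1 2) := by simp (config := { decide := true }) [coordMat, pr]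
lemma ev_1_3 (x : Idx → ℂ) : MvPolynomial.eval x (coordMat 1 3) = x (pr 1 3) := by simp (config := { decide := true }) [coordMat, pr]
lemma ev_1_4 (x : Idx → ℂ) : MvPolynomial.eval x (coordMat 1 4) = x (pr 1 4) := by simp (config := { decide := true }) [coordMat, pr]
lemma ev_1_5 (x : Idx → ℂ) : MvPolynomial.eval x (coordMat 1 5) = x (pr 1 5) := by simp (config := { decide := true }) [coordMat, pr]
lemma ev_2_0 (x : Idx → ℂ) : MvPolynomial.eval x (coordMat 2 0) = -x (pr 0 2) := by simp (config := { decide := true }) [coordMat, pr]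
lemma ev_2_1 (x : Idx → ℂ) : MvPolynomial.eval x (coordMat 2 1) = -x (pr 1 2) := by simp (config := { decide := true }) [coordMat, pr]
lemma ev_2_2 (x : Idx → ℂ) : MvPolynomial.eval x (coordMat 2 2) = 0 := by simp (config := { decide := true }) [coordMat, pr]
lemma ev_2_3 (x : Idx → ℂ) : MvPolynomial.eval x (coordMat 2 3) = x (pr 2 3) := by simp (config := { decide := true }) [coordMat, pr]
lemma ev_2_4 (x : Idx → ℂ) : MvPolynomial.eval x (coordMat 2 4) = x (pr 2 4) := by simp (config := { decide := true }) [coordMat, pr]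
lemma ev_2_5 (x : Idx → ℂ) : MvPolynomial.eval x (coordMat 2 5) = x (pr 2 5) := by simp (config := { decide := true }) [coordMat, pr]
lemma ev_3_0 (x : Idx → ℂ) : MvPolynomial.eval x (coordMat 3 0) = -x (pr 0 3) := by simp (config := { decide := true }) [coordMat, pr]
lemma ev_3_1 (x : Idx → ℂ) : MvPolynomial.eval x (coordMat 3 1) = -x (pr 1 3) := by simp (config := { decide := true }) [coordMat, pr]
lemma ev_3_2 (x : Idx → ℂ) : MvPolynomial.eval x (coordMat 3 2) = -x (pr 2 3) := by simp (config := { decide := true }) [coordMat, pr]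
lemma ev_3_3 (x : Idx → ℂ) : MvPolynomial.eval x (coordMat 3 3) = 0 := by simp (config := { decide := true }) [coordMat, pr]
lemma ev_3_4 (x : Idx → ℂ) : MvPolynomial.eval x (coordMat 3 4) = x (pr 3 4) := by simp (config := { decide := true }) [coordMat, pr]
lemma ev_3_5 (x : Idx → ℂ) : MvPolynomial.eval x (coordMat 3 5) = x (pr 3 5) := by simp (config := { decide := true }) [coordMat, pr]
lemma ev_4_0 (x : Idx → ℂ) : MvPolynomial.eval x (coordMat 4 0) = -x (pr 0 4) := by simp (config := { decide := true }) [coordMat, pr]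
lemma ev_4_1 (x : Idx → ℂ) : MvPolynomial.eval x (coordMat 4 1) = -x (pr 1 4) := by simp (config := { decide := true }) [coordMat, pr]
lemma ev_4_2 (x : Idx → ℂ) : MvPolynomial.eval x (coordMat 4 2) = -x (pr 2 4) := by simp (config := { decide := true }) [coordMat, pr]
lemma ev_4_3 (x : Idx → ℂ) : MvPolynomial.eval x (coordMat 4 3) = -x (pr 3 4) := by simp (config := { decide := true }) [coordMat, pr]
lemma ev_4_4 (x : Idx → ℂ) : MvPolynomial.eval x (coordMat 4 4) = 0 := by simp (config := { decide := true }) [coordMat, pr]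
lemma ev_4_5 (x : Idx → ℂ) : MvPolynomial.eval x (coordMat 4 5) = x (pr 4 5) := by simp (config := { decide := true }) [coordMat, pr]
lemma ev_5_0 (x : Idx → ℂ) : MvPolynomial.eval x (coordMat 5 0) = -x (pr 0 5) := by simp (config := { decide := true }) [coordMat, pr]
lemma ev_5_1 (x : Idx → ℂ) : MvPolynomial.eval x (coordMat 5 1) = -x (pr 1 5) := by simp (config := { decide := true }) [coordMat, pr]
lemma ev_5_2 (x : Idx → ℂ) : MvPolynomial.eval x (coordMat 5 2) = -x (pr 2 5) := by simp (config := { decide := true }) [coordMat, pr]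
lemma ev_5_3 (x : Idx → ℂ) : MvPolynomial.eval x (coordMat 5 3) = -x (pr 3 5) := by simp (config := { decide := true }) [coordMat, pr]
lemma ev_5_4 (x : Idx → ℂ) : MvPolynomial.eval x (coordMat 5 4) = -x (pr 4 5) := by simp (config := { decide := true }) [coordMat, pr]
lemma ev_5_5 (x : Idx → ℂ) : MvPolynomial.eval x (coordMat 5 5) = 0 := by simp (config := { decide := true }) [coordMat, pr]

lemma dfa6_1 (p : Fin 6) (e : Equiv.Perm (Fin 5)) : Equiv.Perm.decomposeFin.symm (p, e) (1 : Fin 6) = Equiv.swap 0 p (e (0 : Fin 5)).succ := by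
  rw [show (1 : Fin 6) = Fin.succ (0 : Fin 5) from rfl, Equiv.Perm.decomposeFin_symm_apply_succ]
lemma dfa6_2 (p : Fin 6) (e : Equiv.Perm (Fin 5)) : Equiv.Perm.decomposeFin.symm (p, e) (2 : Fin 6) = Equiv.swap 0 p (e (1 : Fin 5)).succ := by
  rw [show (2 : Fin 6) = Fin.succ (1 : Fin 5) from rfl, Equiv.Perm.decomposeFin_symm_apply_succ]
lemma dfa6_3 (p : Fin 6) (e : Equiv.Perm (Fin 5)) : Equiv.Perm.decomposeFin.symm (p, e) (3 : Fin 6) = Equiv.swap 0 p (e (2 : Fin 5)).succ := by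
  rw [show (3 : Fin 6) = Fin.succ (2 : Fin 5) from rfl, Equiv.Perm.decomposeFin_symm_apply_succ]
lemma dfa6_4 (p : Fin 6) (e : Equiv.Perm (Fin 5)) : Equiv.Perm.decomposeFin.symm (p, e) (4 : Fin 6) = Equiv.swap 0 p (e (3 : Fin 5)).succ := by
  rw [show (4 : Fin 6) = Fin.succ (3 : Fin 5) from rfl, Equiv.Perm.decomposeFin_symm_apply_succ]
lemma dfa6_5 (p : Fin 6) (e : Equiv.Perm (Fin 5)) : Equiv.Perm.decomposeFin.symm (p, e) (5 : Fin 6) = Equiv.swap 0 p (e (4 : Fin 5)).succ := by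
  rw [show (5 : Fin 6) = Fin.succ (4 : Fin 5) from rfl, Equiv.Perm.decomposeFin_symm_apply_succ]
lemma dfa5_1 (p : Fin 5) (e : Equiv.Perm (Fin 4)) : Equiv.Perm.decomposeFin.symm (p, e) (1 : Fin 5) = Equiv.swap 0 p (e (0 : Fin 4)).succ := by
  rw [show (1 : Fin 5) = Fin.succ (0 : Fin 4) from rfl, Equiv.Perm.decomposeFin_symm_apply_succ]
lemma dfa5_2 (p : Fin 5) (e : Equiv.Perm (Fin 4)) : Equiv.Perm.decomposeFin.symm (p, e) (2 : Fin 5) = Equiv.swap 0 p (e (1 : Fin 4)).succ := by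
  rw [show (2 : Fin 5) = Fin.succ (1 : Fin 4) from rfl, Equiv.Perm.decomposeFin_symm_apply_succ]
lemma dfa5_3 (p : Fin 5) (e : Equiv.Perm (Fin 4)) : Equiv.Perm.decomposeFin.symm (p, e) (3 : Fin 5) = Equiv.swap 0 p (e (2 : Fin 4)).succ := by
  rw [show (3 : Fin 5) = Fin.succ (2 : Fin 4) from rfl, Equiv.Perm.decomposeFin_symm_apply_succ]
lemma dfa5_4 (p : Fin 5) (e : Equiv.Perm (Fin 4)) : Equiv.Perm.decomposeFin.symm (p, e) (4 : Fin 5) = Equiv.swap 0 p (e (3 : Fin 4)).succ := by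
  rw [show (4 : Fin 5) = Fin.succ (3 : Fin 4) from rfl, Equiv.Perm.decomposeFin_symm_apply_succ]
lemma dfa4_1 (p : Fin 4) (e : Equiv.Perm (Fin 3)) : Equiv.Perm.decomposeFin.symm (p, e) (1 : Fin 4) = Equiv.swap 0 p (e (0 : Fin 3)).succ := by
  rw [show (1 : Fin 4) = Fin.succ (0 : Fin 3) from rfl, Equiv.Perm.decomposeFin_symm_apply_succ]
lemma dfa4_2 (p : Fin 4) (e : Equiv.Perm (Fin 3)) : Equiv.Perm.decomposeFin.symm (p, e) (2 : Fin 4) = Equiv.swap 0 p (e (1 : Fin 3)).succ := by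
  rw [show (2 : Fin 4) = Fin.succ (1 : Fin 3) from rfl, Equiv.Perm.decomposeFin_symm_apply_succ]
lemma dfa4_3 (p : Fin 4) (e : Equiv.Perm (Fin 3)) : Equiv.Perm.decomposeFin.symm (p, e) (3 : Fin 4) = Equiv.swap 0 p (e (2 : Fin 3)).succ := by
  rw [show (3 : Fin 4) = Fin.succ (2 : Fin 3) from rfl, Equiv.Perm.decomposeFin_symm_apply_succ]
lemma dfa3_1 (p : Fin 3) (e : Equiv.Perm (Fin 2)) : Equiv.Perm.decomposeFin.symm (p, e) (1 : Fin 3) = Equiv.swap 0 p (e (0 : Fin 2)).succ := by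
  rw [show (1 : Fin 3) = Fin.succ (0 : Fin 2) from rfl, Equiv.Perm.decomposeFin_symm_apply_succ]
lemma dfa3_2 (p : Fin 3) (e : Equiv.Perm (Fin 2)) : Equiv.Perm.decomposeFin.symm (p, e) (2 : Fin 3) = Equiv.swap 0 p (e (1 : Fin 2)).succ := by
  rw [show (2 : Fin 3) = Fin.succ (1 : Fin 2) from rfl, Equiv.Perm.decomposeFin_symm_apply_succ]
lemma dfa2_1 (p : Fin 2) (e : Equiv.Perm (Fin 1)) : Equiv.Perm.decomposeFin.symm (p, e) (1 : Fin 2) = Equiv.swap 0 p (e (0 : Fin 1)).succ := by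
  rw [show (1 : Fin 2) = Fin.succ (0 : Fin 1) from rfl, Equiv.Perm.decomposeFin_symm_apply_succ]

lemma sum_perm_6 {M : Type*} [AddCommMonoid M] (f : Equiv.Perm (Fin 6) → M) :
    ∑ σ, f σ = ∑ p : Fin 6, ∑ e : Equiv.Perm (Fin 5), f (Equiv.Perm.decomposeFin.symm (p, e)) :=
  sum_perm_succ f

lemma sum_perm_5 {M : Type*} [AddCommMonoid M] (f : Equiv.Perm (Fin 5) → M) :
    ∑ σ, f σ = ∑ p : Fin 5, ∑ e : Equiv.Perm (Fin 4), f (Equiv.Perm.decomposeFin.symm (p, e)) :=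
  sum_perm_succ f

lemma sum_perm_4 {M : Type*} [AddCommMonoid M] (f : Equiv.Perm (Fin 4) → M) :
    ∑ σ, f σ = ∑ p : Fin 4, ∑ e : Equiv.Perm (Fin 3), f (Equiv.Perm.decomposeFin.symm (p, e)) :=
  sum_perm_succ f

lemma sum_perm_3 {M : Type*} [AddCommMonoid M] (f : Equiv.Perm (Fin 3) → M) :
    ∑ σ, f σ = ∑ p : Fin 3, ∑ e : Equiv.Perm (Fin 2), f (Equiv.Perm.decomposeFin.symm (p, e)) :=
  sum_perm_succ f

lemma sum_perm_2 {M : Type*} [AddCommMonoid M] (f : Equiv.Perm (Fin 2) → M) :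
    ∑ σ, f σ = ∑ p : Fin 2, ∑ e : Equiv.Perm (Fin 1), f (Equiv.Perm.decomposeFin.symm (p, e)) :=
  sum_perm_succ f

lemma sum_perm_1 {M : Type*} [AddCommMonoid M] (f : Equiv.Perm (Fin 1) → M) :
    ∑ σ, f σ = ∑ p : Fin 1, ∑ e : Equiv.Perm (Fin 0), f (Equiv.Perm.decomposeFin.symm (p, e)) :=
  sum_perm_succ f

set_option maxHeartbeats 10000000 in
set_option maxRecDepth 100000 in
lemma eval_wedgeCubic (x : Idx → ℂ) : eval x wedgeCubic =
    6 * (x (pr 0 1) * x (pr 2 3) * x (pr 4 5) - x (pr 0 1) * x (pr 2 4) * x (pr 3 5) + x (pr 0 1) * x (pr 2 5) * x (pr 3 4) - x (pr 0 2) * x (pr 1 3) * x (pr 4 5) + x (pr 0 2) * x (pr 1 4) * x (pr 3 5) - x (pr 0 2) * x (pr 1 5) * x (pr 3 4) + x (pr 0 3) * x (pr 1 2) * x (pr 4 5) - x (pr 0 3) * x (pr 1 4) * x (pr 2 5) + x (pr 0 3) * x (pr 1 5) * x (pr 2 4) - x (pr 0 4) * x (pr 1 2) * x (pr 3 5) +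 x (pr 0 4) * x (pr 1 3) * x (pr 2 5) - x (pr 0 4) * x (pr 1 5) * x (pr 2 3) + x (pr 0 5) * x (pr 1 2) * x (pr 3 4) - x (pr 0 5) * x (pr 1 3) * x (pr 2 4) + x (pr 0 5) * x (pr 1 4) * x (pr 2 3)) := by
  rw [wedgeCubic]
  simp only [map_mul, map_sum, eval_C]
  simp only [sum_perm_6, sum_perm_5, sum_perm_4, sum_perm_3, sum_perm_2, sum_perm_1, sum_perm_zero]
  simp (config := { maxSteps := 1000000000 }) only [Fin.sum_univ_six, Fin.sum_univ_five, Fin.sum_univ_four, Fin.sum_univ_three, Fin.sum_univ_two, Fin.sum_univ_one]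
  simp (config := { maxSteps := 1000000000, decide := true }) only [
    Equiv.Perm.decomposeFin.symm_sign, Equiv.Perm.sign_one,
    Equiv.Perm.decomposeFin_symm_apply_zero, dfa6_1, dfa6_2, dfa6_3, dfa6_4, dfa6_5, dfa5_1, dfa5_2, dfa5_3, dfa5_4, dfa4_1, dfa4_2, dfa4_3, dfa3_1, dfa3_2, dfa2_1,
    sw6_0_0, sw6_0_1, sw6_0_2, sw6_0_3, sw6_0_4, sw6_0_5, sw6_1_0, sw6_1_1, sw6_1_2, sw6_1_3, sw6_1_4, sw6_1_5, sw6_2_0, sw6_2_1, sw6_2_2, sw6_2_3, sw6_2_4, sw6_2_5, sw6_3_0, sw6_3_1, sw6_3_2, sw6_3_3, sw6_3_4, sw6_3_5, sw6_4_0, sw6_4_1, sw6_4_2, sw6_4_3, sw6_4_4, sw6_4_5, sw6_5_0, sw6_5_1, sw6_5_2, sw6_5_3, sw6_5_4, sw6_5_5, sw5_0_0, sw5_0_1, sw5_0_2, sw5_0_3, sw5_0_4, sw5_1_0, sw5_1_1, sw5_1_2, sw5_1_3, sw5_1_4, sw5_2_0, sw5_2_1, sw5_2_2, sw5_2_3,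 sw5_2_4, sw5_3_0, sw5_3_1, sw5_3_2, sw5_3_3, sw5_3_4, sw5_4_0, sw5_4_1, sw5_4_2, sw5_4_3, sw5_4_4, sw4_0_0, sw4_0_1, sw4_0_2, sw4_0_3, sw4_1_0, sw4_1_1, sw4_1_2, sw4_1_3, sw4_2_0, sw4_2_1, sw4_2_2, sw4_2_3, sw4_3_0, sw4_3_1, sw4_3_2, sw4_3_3, sw3_0_0, sw3_0_1, sw3_0_2, sw3_1_0, sw3_1_1, sw3_1_2, sw3_2_0, sw3_2_1, sw3_2_2, sw2_0_0, sw2_0_1, sw2_1_0, sw2_1_1, sc5_0, sc5_1, sc5_2, sc5_3, sc5_4, sc4_0, sc4_1, sc4_2, sc4_3, sc3_0, sc3_1, sc3_2, sc2_0, sc2_1, sc1_0, ev_0_0, ev_0_1, ev_0_2, ev_0_3, ev_0_4, ev_0_5, ev_1_0, ev_1_1, ev_1_2, ev_1_3, ev_1_4, ev_1_5, ev_2_0, ev_2_1, ev_2_2, ev_2_3, ev_2_4, ev_2_5, ev_3_0, ev_3_1, ev_3_2, ev_3_3, ev_3_4, ev_3_5, ev_4_0, ev_4_1, ev_4_2,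 ev_4_3, ev_4_4, ev_4_5, ev_5_0, ev_5_1, ev_5_2, ev_5_3, ev_5_4, ev_5_5,
    Units.val_mul, Units.val_one, Units.val_neg, Int.cast_mul, Int.cast_one, Int.cast_neg,
    mul_one, one_mul, ite_true, ite_false]
  ring

lemma wc_eq : wedgeCubic = C (6 : ℂ) * (X (pr 0 1) * X (pr 2 3) * X (pr 4 5) - X (pr 0 1) * X (pr 2 4) * X (pr 3 5) + X (pr 0 1) * X (pr 2 5) * X (pr 3 4) - X (pr 0 2) * X (pr 1 3) * X (pr 4 5) + X (pr 0 2) * X (pr 1 4) * X (pr 3 5) - X (pr 0 2) * X (pr 1 5) * X (pr 3 4) + X (pr 0 3) * X (pr 1 2) * X (pr 4 5) - X (pr 0 3) * X (pr 1 4) * X (pr 2 5) + X (pr 0 3) * X (pr 1 5) * X (pr 2 4) - X (pr 0 4) * X (pr 1 2) * X (pr 3 5) + X (pr 0 4) * X (pr 1 3) * X (pr 2 5) - X (pr 0 4) * X (pr 1 5) * X (pr 2 3) + X (pr 0 5) * X (pr 1 2) * X (pr 3 4) - X (pr 0 5) * X (pr 1 3) * X (pr 2 4) + X (pr 0 5)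 * X (pr 1 4) * X (pr 2 3)) := by
  apply MvPolynomial.funext
  intro x
  rw [eval_wedgeCubic]
  simp [pr]
  try ring

open Submodule in
lemma two_le_rank {m : Type*} [Fintype m] [DecidableEq m]
    {A : Matrix m m ℂ} (r1 r2 c1 c2 : m)
    (h11 : A r1 c1 ≠ 0) (h12 : A r1 c2 = 0) (h21 : A r2 c1 = 0) (h22 : A r2 c2 ≠ 0) :
    2 ≤ A.rank := by
  have hli : LinearIndependent ℂ (![A r1, A r2]) := by
    rw [Fintype.linearIndependent_iff]
    intro g hg
    have hgc1 := congrFun hg c1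
    have hgc2 := congrFun hg c2
    simp [Fin.sum_univ_two, h12, h21] at hgc1 hgc2
    have h0 : g 0 = 0 := by
      rcases hgc1 with h | h
      · exact h
      · exact absurd h h11
    have h1 : g 1 = 0 := by
      rcases hgc2 with h | h
      · exact h
      · exact absurd h h22
    intro i; fin_cases i <;> assumption
  rw [Matrix.rank_eq_finrank_span_row]
  have hsub : span ℂ (Set.range ![A r1, A r2]) ≤ span ℂ (Set.range A) := by
    apply span_mono
    rintro v ⟨i, rfl⟩
    fin_cases i
    · exact ⟨r1, rfl⟩
    · exact ⟨r2, rfl⟩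
  have h2 : Module.finrank ℂ (span ℂ (Set.range ![A r1, A r2])) = 2 := by
    rw [finrank_span_eq_card hli, Fintype.card_fin]
  calc 2 = Module.finrank ℂ (span ℂ (Set.range ![A r1, A r2])) := h2.symm
    _ ≤ Module.finrank ℂ (span ℂ (Set.range A)) := Submodule.finrank_mono hsub

set_option maxHeartbeats 4000000 in
/-- If the Hessian of the cubic intersection form of a complex 3-torus has rank at
most 1 at a point `q ∈ ℂ¹⁵ = H²(A,ℂ)`, then `q = 0`. -/
theorem stmt4 (q : Idx → ℂ) (h : (hessian wedgeCubic q).rank ≤ 1) : q = 0 := by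
  have h01 : q (pr 0 1) = 0 := by
    by_contra hp
    have e11 : hessian wedgeCubic q (pr 2 3) (pr 4 5) = (6 : ℂ) * q (pr 0 1) := by
      simp [hessian, wc_eq, pr, pderiv_mul, pderiv_C_mul, pderiv_X, Pi.single_apply]
      try ring
    have e22 : hessian wedgeCubic q (pr 2 4) (pr 3 5) = (-6 : ℂ) * q (pr 0 1) := by
      simp [hessian, wc_eq, pr, pderiv_mul, pderiv_C_mul, pderiv_X, Pi.single_apply]
      try ring
    have e12 : hessian wedgeCubic q (pr 2 3) (pr 3 5) = 0 := by
      simp [hessian, wc_eq, pr, pderiv_mul, pderiv_C_mul, pderiv_X, Pi.single_apply]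
    have e21 : hessian wedgeCubic q (pr 2 4) (pr 4 5) = 0 := by
      simp [hessian, wc_eq, pr, pderiv_mul, pderiv_C_mul, pderiv_X, Pi.single_apply]
    have h2 : 2 ≤ (hessian wedgeCubic q).rank :=
      two_le_rank (pr 2 3) (pr 2 4) (pr 4 5) (pr 3 5)
        (by rw [e11]; exact mul_ne_zero (by norm_num) hp) e12 e21
        (by rw [e22]; exact mul_ne_zero (by norm_num) hp)
    omega
  have h02 : q (pr 0 2) = 0 := by
    by_contra hp
    have e11 : hessian wedgeCubic q (pr 1 3) (pr 4 5) = (-6 : ℂ) * q (pr 0 2) := by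
      simp [hessian, wc_eq, pr, pderiv_mul, pderiv_C_mul, pderiv_X, Pi.single_apply]
      try ring
    have e22 : hessian wedgeCubic q (pr 1 4) (pr 3 5) = (6 : ℂ) * q (pr 0 2) := by
      simp [hessian, wc_eq, pr, pderiv_mul, pderiv_C_mul, pderiv_X, Pi.single_apply]
      try ring
    have e12 : hessian wedgeCubic q (pr 1 3) (pr 3 5) = 0 := by
      simp [hessian, wc_eq, pr, pderiv_mul, pderiv_C_mul, pderiv_X, Pi.single_apply]
    have e21 : hessian wedgeCubic q (pr 1 4) (pr 4 5) = 0 := by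
      simp [hessian, wc_eq, pr, pderiv_mul, pderiv_C_mul, pderiv_X, Pi.single_apply]
    have h2 : 2 ≤ (hessian wedgeCubic q).rank :=
      two_le_rank (pr 1 3) (pr 1 4) (pr 4 5) (pr 3 5)
        (by rw [e11]; exact mul_ne_zero (by norm_num) hp) e12 e21
        (by rw [e22]; exact mul_ne_zero (by norm_num) hp)
    omega
  have h03 : q (pr 0 3) = 0 := by
    by_contra hp
    have e11 : hessian wedgeCubic q (pr 1 2) (pr 4 5) = (6 : ℂ) * q (pr 0 3) := by
      simp [hessian, wc_eq, pr, pderiv_mul, pderiv_C_mul, pderiv_X, Pi.single_apply]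
      try ring
    have e22 : hessian wedgeCubic q (pr 1 4) (pr 2 5) = (-6 : ℂ) * q (pr 0 3) := by
      simp [hessian, wc_eq, pr, pderiv_mul, pderiv_C_mul, pderiv_X, Pi.single_apply]
      try ring
    have e12 : hessian wedgeCubic q (pr 1 2) (pr 2 5) = 0 := by
      simp [hessian, wc_eq, pr, pderiv_mul, pderiv_C_mul, pderiv_X, Pi.single_apply]
    have e21 : hessian wedgeCubic q (pr 1 4) (pr 4 5) = 0 := by
      simp [hessian, wc_eq, pr, pderiv_mul, pderiv_C_mul, pderiv_X, Pi.single_apply]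
    have h2 : 2 ≤ (hessian wedgeCubic q).rank :=
      two_le_rank (pr 1 2) (pr 1 4) (pr 4 5) (pr 2 5)
        (by rw [e11]; exact mul_ne_zero (by norm_num) hp) e12 e21
        (by rw [e22]; exact mul_ne_zero (by norm_num) hp)
    omega
  have h04 : q (pr 0 4) = 0 := by
    by_contra hp
    have e11 : hessian wedgeCubic q (pr 1 2) (pr 3 5) = (-6 : ℂ) * q (pr 0 4) := by
      simp [hessian, wc_eq, pr, pderiv_mul, pderiv_C_mul, pderiv_X, Pi.single_apply]
      try ring
    have e22 : hessian wedgeCubic q (pr 1 3) (pr 2 5) = (6 : ℂ) * q (pr 0 4) := by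
      simp [hessian, wc_eq, pr, pderiv_mul, pderiv_C_mul, pderiv_X, Pi.single_apply]
      try ring
    have e12 : hessian wedgeCubic q (pr 1 2) (pr 2 5) = 0 := by
      simp [hessian, wc_eq, pr, pderiv_mul, pderiv_C_mul, pderiv_X, Pi.single_apply]
    have e21 : hessian wedgeCubic q (pr 1 3) (pr 3 5) = 0 := by
      simp [hessian, wc_eq, pr, pderiv_mul, pderiv_C_mul, pderiv_X, Pi.single_apply]
    have h2 : 2 ≤ (hessian wedgeCubic q).rank :=
      two_le_rank (pr 1 2) (pr 1 3) (pr 3 5) (pr 2 5)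
        (by rw [e11]; exact mul_ne_zero (by norm_num) hp) e12 e21
        (by rw [e22]; exact mul_ne_zero (by norm_num) hp)
    omega
  have h05 : q (pr 0 5) = 0 := by
    by_contra hp
    have e11 : hessian wedgeCubic q (pr 1 2) (pr 3 4) = (6 : ℂ) * q (pr 0 5) := by
      simp [hessian, wc_eq, pr, pderiv_mul, pderiv_C_mul, pderiv_X, Pi.single_apply]
      try ring
    have e22 : hessian wedgeCubic q (pr 1 3) (pr 2 4) = (-6 : ℂ) * q (pr 0 5) := by
      simp [hessian, wc_eq, pr, pderiv_mul, pderiv_C_mul, pderiv_X, Pi.single_apply]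
      try ring
    have e12 : hessian wedgeCubic q (pr 1 2) (pr 2 4) = 0 := by
      simp [hessian, wc_eq, pr, pderiv_mul, pderiv_C_mul, pderiv_X, Pi.single_apply]
    have e21 : hessian wedgeCubic q (pr 1 3) (pr 3 4) = 0 := by
      simp [hessian, wc_eq, pr, pderiv_mul, pderiv_C_mul, pderiv_X, Pi.single_apply]
    have h2 : 2 ≤ (hessian wedgeCubic q).rank :=
      two_le_rank (pr 1 2) (pr 1 3) (pr 3 4) (pr 2 4)
        (by rw [e11]; exact mul_ne_zero (by norm_num) hp) e12 e21
        (by rw [e22]; exact mul_ne_zero (by norm_num) hp)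
    omega
  have h12 : q (pr 1 2) = 0 := by
    by_contra hp
    have e11 : hessian wedgeCubic q (pr 0 3) (pr 4 5) = (6 : ℂ) * q (pr 1 2) := by
      simp [hessian, wc_eq, pr, pderiv_mul, pderiv_C_mul, pderiv_X, Pi.single_apply]
      try ring
    have e22 : hessian wedgeCubic q (pr 0 4) (pr 3 5) = (-6 : ℂ) * q (pr 1 2) := by
      simp [hessian, wc_eq, pr, pderiv_mul, pderiv_C_mul, pderiv_X, Pi.single_apply]
      try ring
    have e12 : hessian wedgeCubic q (pr 0 3) (pr 3 5) = 0 := by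
      simp [hessian, wc_eq, pr, pderiv_mul, pderiv_C_mul, pderiv_X, Pi.single_apply]
    have e21 : hessian wedgeCubic q (pr 0 4) (pr 4 5) = 0 := by
      simp [hessian, wc_eq, pr, pderiv_mul, pderiv_C_mul, pderiv_X, Pi.single_apply]
    have h2 : 2 ≤ (hessian wedgeCubic q).rank :=
      two_le_rank (pr 0 3) (pr 0 4) (pr 4 5) (pr 3 5)
        (by rw [e11]; exact mul_ne_zero (by norm_num) hp) e12 e21
        (by rw [e22]; exact mul_ne_zero (by norm_num) hp)
    omega
  have h13 : q (pr 1 3) = 0 := by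
    by_contra hp
    have e11 : hessian wedgeCubic q (pr 0 2) (pr 4 5) = (-6 : ℂ) * q (pr 1 3) := by
      simp [hessian, wc_eq, pr, pderiv_mul, pderiv_C_mul, pderiv_X, Pi.single_apply]
      try ring
    have e22 : hessian wedgeCubic q (pr 0 4) (pr 2 5) = (6 : ℂ) * q (pr 1 3) := by
      simp [hessian, wc_eq, pr, pderiv_mul, pderiv_C_mul, pderiv_X, Pi.single_apply]
      try ring
    have e12 : hessian wedgeCubic q (pr 0 2) (pr 2 5) = 0 := by
      simp [hessian, wc_eq, pr, pderiv_mul, pderiv_C_mul, pderiv_X, Pi.single_apply]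
    have e21 : hessian wedgeCubic q (pr 0 4) (pr 4 5) = 0 := by
      simp [hessian, wc_eq, pr, pderiv_mul, pderiv_C_mul, pderiv_X, Pi.single_apply]
    have h2 : 2 ≤ (hessian wedgeCubic q).rank :=
      two_le_rank (pr 0 2) (pr 0 4) (pr 4 5) (pr 2 5)
        (by rw [e11]; exact mul_ne_zero (by norm_num) hp) e12 e21
        (by rw [e22]; exact mul_ne_zero (by norm_num) hp)
    omega
  have h14 : q (pr 1 4) = 0 := by
    by_contra hp
    have e11 : hessian wedgeCubic q (pr 0 2) (pr 3 5) = (6 : ℂ) * q (pr 1 4) := by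
      simp [hessian, wc_eq, pr, pderiv_mul, pderiv_C_mul, pderiv_X, Pi.single_apply]
      try ring
    have e22 : hessian wedgeCubic q (pr 0 3) (pr 2 5) = (-6 : ℂ) * q (pr 1 4) := by
      simp [hessian, wc_eq, pr, pderiv_mul, pderiv_C_mul, pderiv_X, Pi.single_apply]
      try ring
    have e12 : hessian wedgeCubic q (pr 0 2) (pr 2 5) = 0 := by
      simp [hessian, wc_eq, pr, pderiv_mul, pderiv_C_mul, pderiv_X, Pi.single_apply]
    have e21 : hessian wedgeCubic q (pr 0 3) (pr 3 5) = 0 := by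
      simp [hessian, wc_eq, pr, pderiv_mul, pderiv_C_mul, pderiv_X, Pi.single_apply]
    have h2 : 2 ≤ (hessian wedgeCubic q).rank :=
      two_le_rank (pr 0 2) (pr 0 3) (pr 3 5) (pr 2 5)
        (by rw [e11]; exact mul_ne_zero (by norm_num) hp) e12 e21
        (by rw [e22]; exact mul_ne_zero (by norm_num) hp)
    omega
  have h15 : q (pr 1 5) = 0 := by
    by_contra hp
    have e11 : hessian wedgeCubic q (pr 0 2) (pr 3 4) = (-6 : ℂ) * q (pr 1 5) := by
      simp [hessian, wc_eq, pr, pderiv_mul, pderiv_C_mul, pderiv_X, Pi.single_apply]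
      try ring
    have e22 : hessian wedgeCubic q (pr 0 3) (pr 2 4) = (6 : ℂ) * q (pr 1 5) := by
      simp [hessian, wc_eq, pr, pderiv_mul, pderiv_C_mul, pderiv_X, Pi.single_apply]
      try ring
    have e12 : hessian wedgeCubic q (pr 0 2) (pr 2 4) = 0 := by
      simp [hessian, wc_eq, pr, pderiv_mul, pderiv_C_mul, pderiv_X, Pi.single_apply]
    have e21 : hessian wedgeCubic q (pr 0 3) (pr 3 4) = 0 := by
      simp [hessian, wc_eq, pr, pderiv_mul, pderiv_C_mul, pderiv_X, Pi.single_apply]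
    have h2 : 2 ≤ (hessian wedgeCubic q).rank :=
      two_le_rank (pr 0 2) (pr 0 3) (pr 3 4) (pr 2 4)
        (by rw [e11]; exact mul_ne_zero (by norm_num) hp) e12 e21
        (by rw [e22]; exact mul_ne_zero (by norm_num) hp)
    omega
  have h23 : q (pr 2 3) = 0 := by
    by_contra hp
    have e11 : hessian wedgeCubic q (pr 0 1) (pr 4 5) = (6 : ℂ) * q (pr 2 3) := by
      simp [hessian, wc_eq, pr, pderiv_mul, pderiv_C_mul, pderiv_X, Pi.single_apply]
      try ring
    have e22 : hessian wedgeCubic q (pr 0 4) (pr 1 5) = (-6 : ℂ) * q (pr 2 3) := by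
      simp [hessian, wc_eq, pr, pderiv_mul, pderiv_C_mul, pderiv_X, Pi.single_apply]
      try ring
    have e12 : hessian wedgeCubic q (pr 0 1) (pr 1 5) = 0 := by
      simp [hessian, wc_eq, pr, pderiv_mul, pderiv_C_mul, pderiv_X, Pi.single_apply]
    have e21 : hessian wedgeCubic q (pr 0 4) (pr 4 5) = 0 := by
      simp [hessian, wc_eq, pr, pderiv_mul, pderiv_C_mul, pderiv_X, Pi.single_apply]
    have h2 : 2 ≤ (hessian wedgeCubic q).rank :=
      two_le_rank (pr 0 1) (pr 0 4) (pr 4 5) (pr 1 5)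
        (by rw [e11]; exact mul_ne_zero (by norm_num) hp) e12 e21
        (by rw [e22]; exact mul_ne_zero (by norm_num) hp)
    omega
  have h24 : q (pr 2 4) = 0 := by
    by_contra hp
    have e11 : hessian wedgeCubic q (pr 0 1) (pr 3 5) = (-6 : ℂ) * q (pr 2 4) := by
      simp [hessian, wc_eq, pr, pderiv_mul, pderiv_C_mul, pderiv_X, Pi.single_apply]
      try ring
    have e22 : hessian wedgeCubic q (pr 0 3) (pr 1 5) = (6 : ℂ) * q (pr 2 4) := by
      simp [hessian, wc_eq, pr, pderiv_mul, pderiv_C_mul, pderiv_X, Pi.single_apply]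
      try ring
    have e12 : hessian wedgeCubic q (pr 0 1) (pr 1 5) = 0 := by
      simp [hessian, wc_eq, pr, pderiv_mul, pderiv_C_mul, pderiv_X, Pi.single_apply]
    have e21 : hessian wedgeCubic q (pr 0 3) (pr 3 5) = 0 := by
      simp [hessian, wc_eq, pr, pderiv_mul, pderiv_C_mul, pderiv_X, Pi.single_apply]
    have h2 : 2 ≤ (hessian wedgeCubic q).rank :=
      two_le_rank (pr 0 1) (pr 0 3) (pr 3 5) (pr 1 5)
        (by rw [e11]; exact mul_ne_zero (by norm_num) hp) e12 e21
        (by rw [e22]; exact mul_ne_zero (by norm_num) hp)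
    omega
  have h25 : q (pr 2 5) = 0 := by
    by_contra hp
    have e11 : hessian wedgeCubic q (pr 0 1) (pr 3 4) = (6 : ℂ) * q (pr 2 5) := by
      simp [hessian, wc_eq, pr, pderiv_mul, pderiv_C_mul, pderiv_X, Pi.single_apply]
      try ring
    have e22 : hessian wedgeCubic q (pr 0 3) (pr 1 4) = (-6 : ℂ) * q (pr 2 5) := by
      simp [hessian, wc_eq, pr, pderiv_mul, pderiv_C_mul, pderiv_X, Pi.single_apply]
      try ring
    have e12 : hessian wedgeCubic q (pr 0 1) (pr 1 4) = 0 := by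
      simp [hessian, wc_eq, pr, pderiv_mul, pderiv_C_mul, pderiv_X, Pi.single_apply]
    have e21 : hessian wedgeCubic q (pr 0 3) (pr 3 4) = 0 := by
      simp [hessian, wc_eq, pr, pderiv_mul, pderiv_C_mul, pderiv_X, Pi.single_apply]
    have h2 : 2 ≤ (hessian wedgeCubic q).rank :=
      two_le_rank (pr 0 1) (pr 0 3) (pr 3 4) (pr 1 4)
        (by rw [e11]; exact mul_ne_zero (by norm_num) hp) e12 e21
        (by rw [e22]; exact mul_ne_zero (by norm_num) hp)
    omega
  have h34 : q (pr 3 4) = 0 := by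
    by_contra hp
    have e11 : hessian wedgeCubic q (pr 0 1) (pr 2 5) = (6 : ℂ) * q (pr 3 4) := by
      simp [hessian, wc_eq, pr, pderiv_mul, pderiv_C_mul, pderiv_X, Pi.single_apply]
      try ring
    have e22 : hessian wedgeCubic q (pr 0 2) (pr 1 5) = (-6 : ℂ) * q (pr 3 4) := by
      simp [hessian, wc_eq, pr, pderiv_mul, pderiv_C_mul, pderiv_X, Pi.single_apply]
      try ring
    have e12 : hessian wedgeCubic q (pr 0 1) (pr 1 5) = 0 := by
      simp [hessian, wc_eq, pr, pderiv_mul, pderiv_C_mul, pderiv_X, Pi.single_apply]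
    have e21 : hessian wedgeCubic q (pr 0 2) (pr 2 5) = 0 := by
      simp [hessian, wc_eq, pr, pderiv_mul, pderiv_C_mul, pderiv_X, Pi.single_apply]
    have h2 : 2 ≤ (hessian wedgeCubic q).rank :=
      two_le_rank (pr 0 1) (pr 0 2) (pr 2 5) (pr 1 5)
        (by rw [e11]; exact mul_ne_zero (by norm_num) hp) e12 e21
        (by rw [e22]; exact mul_ne_zero (by norm_num) hp)
    omega
  have h35 : q (pr 3 5) = 0 := by
    by_contra hp
    have e11 : hessian wedgeCubic q (pr 0 1) (pr 2 4) = (-6 : ℂ) * q (pr 3 5) := by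
      simp [hessian, wc_eq, pr, pderiv_mul, pderiv_C_mul, pderiv_X, Pi.single_apply]
      try ring
    have e22 : hessian wedgeCubic q (pr 0 2) (pr 1 4) = (6 : ℂ) * q (pr 3 5) := by
      simp [hessian, wc_eq, pr, pderiv_mul, pderiv_C_mul, pderiv_X, Pi.single_apply]
      try ring
    have e12 : hessian wedgeCubic q (pr 0 1) (pr 1 4) = 0 := by
      simp [hessian, wc_eq, pr, pderiv_mul, pderiv_C_mul, pderiv_X, Pi.single_apply]
    have e21 : hessian wedgeCubic q (pr 0 2) (pr 2 4) = 0 := by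
      simp [hessian, wc_eq, pr, pderiv_mul, pderiv_C_mul, pderiv_X, Pi.single_apply]
    have h2 : 2 ≤ (hessian wedgeCubic q).rank :=
      two_le_rank (pr 0 1) (pr 0 2) (pr 2 4) (pr 1 4)
        (by rw [e11]; exact mul_ne_zero (by norm_num) hp) e12 e21
        (by rw [e22]; exact mul_ne_zero (by norm_num) hp)
    omega
  have h45 : q (pr 4 5) = 0 := by
    by_contra hp
    have e11 : hessian wedgeCubic q (pr 0 1) (pr 2 3) = (6 : ℂ) * q (pr 4 5) := by
      simp [hessian, wc_eq, pr, pderiv_mul, pderiv_C_mul, pderiv_X, Pi.single_apply]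
      try ring
    have e22 : hessian wedgeCubic q (pr 0 2) (pr 1 3) = (-6 : ℂ) * q (pr 4 5) := by
      simp [hessian, wc_eq, pr, pderiv_mul, pderiv_C_mul, pderiv_X, Pi.single_apply]
      try ring
    have e12 : hessian wedgeCubic q (pr 0 1) (pr 1 3) = 0 := by
      simp [hessian, wc_eq, pr, pderiv_mul, pderiv_C_mul, pderiv_X, Pi.single_apply]
    have e21 : hessian wedgeCubic q (pr 0 2) (pr 2 3) = 0 := by
      simp [hessian, wc_eq, pr, pderiv_mul, pderiv_C_mul, pderiv_X, Pi.single_apply]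
    have h2 : 2 ≤ (hessian wedgeCubic q).rank :=
      two_le_rank (pr 0 1) (pr 0 2) (pr 2 3) (pr 1 3)
        (by rw [e11]; exact mul_ne_zero (by norm_num) hp) e12 e21
        (by rw [e22]; exact mul_ne_zero (by norm_num) hp)
    omega
  funext p
  obtain ⟨⟨a, b⟩, hab⟩ := p
  fin_cases a <;> fin_cases b <;>
    first
      | exact absurd hab (by decide)
      | exact h01 | exact h02 | exact h03 | exact h04 | exact h05 | exact h12 | exact h13 | exact h14 | exact h15 | exact h23 | exact h24 | exact h25 | exact h34 | exact h35 | exact h45
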